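/- Let a ∈ ℚ with a > 0, b ∈ ℚ, let λ = λ_{a,b} be the automorphism of ℚ[T] sending P(T) to P(aT+b), let P be a nonzero polynomial of ℚ[T], and let n ≥ deg(P). Then deg(λP) = deg(P), and (3H(λ))^{-n} ≤ H(λP)/H(P) ≤ (3H(λ))^{n}, and H(λ)^{-n} ≤ cont(λP)/cont(P) ≤ H(λ)^{n}. -/

import Mathlib

/-- Content of a vector of rationals (gcd of numerators after clearing denominators,
divided by the common denominator). -/
noncomputable def vcont (x : Fin 3 → ℚ) : ℚ :=
  let d : ℤ := Finset.univ.lcm fun i => ((x i).den : ℤ)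
  ((Finset.univ.gcd fun i => (x i * (d : ℚ)).num : ℤ) : ℚ) / (d : ℚ)

/-- Projective height of a point of `ℚ³`. -/
noncomputable def vheight (x : Fin 3 → ℚ) : ℚ :=
  (Finset.univ.sup' Finset.univ_nonempty fun i => |x i|) / vcont x

/-- `H(λ_{a,b}) := H(1,a,b)`, the height of the automorphism `P(T) ↦ P(aT+b)` of `ℚ[T]`. -/
noncomputable def lamheight (a b : ℚ) : ℚ := vheight ![1, a, b]

/-- Norm of a rational polynomial: maximum absolute value of its coefficients. -/
noncomputable def qnorm (P : Polynomial ℚ) : ℚ :=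
  (Finset.range (P.natDegree + 1)).sup' Finset.nonempty_range_add_one fun i => |P.coeff i|

/-- Content of a rational polynomial: the unique positive rational `r` (for `P ≠ 0`) such
that `P / r` is a primitive integer polynomial. -/
noncomputable def qcont (P : Polynomial ℚ) : ℚ :=
  let d : ℤ := (Finset.range (P.natDegree + 1)).lcm fun i => ((P.coeff i).den : ℤ)
  (((Finset.range (P.natDegree + 1)).gcd fun i => (P.coeff i * (d : ℚ)).num : ℤ) : ℚ) / (d : ℚ)

/-- Height of a rational polynomial: `H(P) = ‖P‖ / cont(P)`. -/
noncomputable def qheight (P : Polynomial ℚ) : ℚ := qnorm P / qcont P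

noncomputable def fcont {ι : Type*} (s : Finset ι) (f : ι → ℚ) : ℚ :=
  let d : ℤ := s.lcm fun i => ((f i).den : ℤ)
  ((s.gcd fun i => (f i * (d : ℚ)).num : ℤ) : ℚ) / (d : ℚ)

namespace Fc

variable {ι : Type*} (s : Finset ι) (f : ι → ℚ)

def fd : ℤ := s.lcm fun i => ((f i).den : ℤ)

noncomputable def fN : ι → ℤ := fun i => (f i * ((fd s f : ℤ) : ℚ)).num

noncomputable def fg : ℤ := s.gcd (fN s f)

lemma fcont_def : fcont s f = ((fg s f : ℤ) : ℚ) / ((fd s f : ℤ) : ℚ) := rfl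

lemma fg_def : fg s f = s.gcd (fN s f) := rfl

lemma d_pos : 0 < fd s f := by
  have hne : fd s f ≠ 0 := by
    intro h
    rw [fd, Finset.lcm_eq_zero_iff] at h
    obtain ⟨i, _, hi⟩ := h
    exact (Nat.cast_ne_zero.mpr (f i).den_nz) hi
  have habs : |fd s f| = fd s f := by rw [Int.abs_eq_normalize, fd, Finset.normalize_lcm]
  exact lt_of_le_of_ne (abs_eq_self.mp habs) (Ne.symm hne)

lemma g_nonneg : 0 ≤ fg s f := by
  rw [fg, ← Finset.normalize_gcd, ← Int.abs_eq_normalize]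
  exact abs_nonneg _

lemma num_cast {i : ι} (hi : i ∈ s) : ((fN s f i : ℤ) : ℚ) = f i * ((fd s f : ℤ) : ℚ) := by
  obtain ⟨k, hk⟩ := Finset.dvd_lcm (s := s) (f := fun i => ((f i).den : ℤ)) hi
  have h1 : f i * ((fd s f : ℤ) : ℚ) = (((f i).num * k : ℤ) : ℚ) := by
    rw [fd, hk]; push_cast
    rw [← mul_assoc, Rat.mul_den_eq_num]
  rw [fN, h1, Rat.num_intCast]

lemma fcont_spec {i₀ : ι} (hi₀ : i₀ ∈ s) (h0 : f i₀ ≠ 0) :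
    0 < fcont s f ∧ ∃ z : ι → ℤ, (∀ i ∈ s, f i = fcont s f * z i) ∧ s.gcd z = 1 := by
  classical
  have hd : 0 < fd s f := d_pos s f
  have hdne : ((fd s f : ℤ) : ℚ) ≠ 0 := Int.cast_ne_zero.mpr hd.ne'
  have hcast : ∀ i ∈ s, ((fN s f i : ℤ) : ℚ) = f i * ((fd s f : ℤ) : ℚ) :=
    fun i hi => num_cast s f hi
  have hN0 : fN s f i₀ ≠ 0 := by
    intro h
    have h2 := hcast i₀ hi₀
    rw [h] at h2
    have h3 : f i₀ * ((fd s f : ℤ) : ℚ) = 0 := by exact_mod_cast h2.symm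
    rcases mul_eq_zero.mp h3 with h' | h'
    · exact h0 h'
    · exact hdne h'
  have hgne : fg s f ≠ 0 := fun h => hN0 (Finset.gcd_eq_zero_iff.mp h i₀ hi₀)
  have hgpos : 0 < fg s f := lt_of_le_of_ne (g_nonneg s f) (Ne.symm hgne)
  refine ⟨by rw [fcont_def]; positivity, fun i => fN s f i / fg s f, fun i hi => ?_,
    Finset.gcd_div_eq_one hi₀ hN0⟩
  obtain ⟨k, hk⟩ := Finset.gcd_dvd (f := fN s f) hi
  rw [fcont_def]
  rw [← fg_def] at hk
  beta_reduce
  rw [hk, Int.mul_ediv_cancel_left _ hgne]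
  have h2 := hcast i hi
  rw [hk] at h2
  push_cast at h2 ⊢
  field_simp
  linarith [h2]

lemma fcont_dvd (r : ℚ) (hr : 0 < r) (h : ∀ i ∈ s, ∃ z : ℤ, f i = r * z) :
    ∃ m : ℤ, fcont s f = r * m := by
  classical
  have hd : 0 < fd s f := d_pos s f
  have hcast : ∀ i ∈ s, ((fN s f i : ℤ) : ℚ) = f i * ((fd s f : ℤ) : ℚ) :=
    fun i hi => num_cast s f hi
  have hdvd : (r.num * fd s f) ∣ fg s f * (r.den : ℤ) := by
    have h1 : (s.gcd fun i => fN s f i * (r.den : ℤ)) = fg s f * normalize (r.den : ℤ) :=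
      Finset.gcd_mul_right
    rw [Int.normalize_of_nonneg (by positivity)] at h1
    rw [← h1]
    refine Finset.dvd_gcd fun i hi => ?_
    obtain ⟨z, hz⟩ := h i hi
    refine ⟨z, ?_⟩
    have h2 : ((fN s f i * (r.den : ℤ) : ℤ) : ℚ) = ((r.num * fd s f * z : ℤ) : ℚ) := by
      push_cast
      rw [hcast i hi, hz]
      have h3 : (r.num : ℚ) = r * r.den := (Rat.mul_den_eq_num r).symm
      rw [h3]; ring
    exact_mod_cast h2
  obtain ⟨c, hc⟩ := hdvd
  refine ⟨c, ?_⟩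
  have hcQ : ((fg s f : ℤ) : ℚ) * r.den = r.num * fd s f * c := by exact_mod_cast hc
  have hdne : ((fd s f : ℤ) : ℚ) ≠ 0 := Int.cast_ne_zero.mpr hd.ne'
  have hdenne : ((r.den : ℚ)) ≠ 0 := by positivity
  rw [fcont_def]
  have hr' : (r.num : ℚ) = r * r.den := (Rat.mul_den_eq_num r).symm
  rw [hr'] at hcQ
  field_simp
  have h4 : ((fg s f : ℤ) : ℚ) * r.den = (r * c * fd s f) * r.den := by rw [hcQ]; ring
  exact mul_right_cancel₀ hdenne (h4.trans (by ring))

lemma fcont_eq_of (r : ℚ) (hr : 0 < r) (z : ι → ℤ)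
    (hz : ∀ i ∈ s, f i = r * z i) (hgcd : s.gcd z = 1)
    {i₀ : ι} (hi₀ : i₀ ∈ s) (h0 : f i₀ ≠ 0) :
    fcont s f = r := by
  obtain ⟨hpos, y, hy, hgy⟩ := fcont_spec s f hi₀ h0
  obtain ⟨m, hm⟩ := fcont_dvd s f r hr (fun i hi => ⟨z i, hz i hi⟩)
  have hmpos : 0 < (m : ℚ) := by
    by_contra h
    push_neg at h
    nlinarith
  have hdvd : ∀ i ∈ s, m ∣ z i := by
    intro i hi
    refine ⟨y i, ?_⟩
    have h1 : r * (z i : ℚ) = r * (m * y i) := by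
      rw [← hz i hi, hy i hi, hm]; ring
    have h2 : (z i : ℚ) = ((m * y i : ℤ) : ℚ) := by
      push_cast
      exact mul_left_cancel₀ hr.ne' h1
    exact_mod_cast h2
  have h1 : m ∣ (1 : ℤ) := hgcd ▸ Finset.dvd_gcd hdvd
  have h2 : m = 1 := by
    rcases Int.isUnit_iff.mp (isUnit_of_dvd_one h1) with h | h
    · exact h
    · rw [h] at hmpos; norm_num at hmpos
  rw [hm, h2]
  simp

end Fc
section Chunk2
open Polynomial Fc

lemma qcont_def' (P : ℚ[X]) :
    qcont P = fcont (Finset.range (P.natDegree + 1)) (fun i => P.coeff i) := rfl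

lemma vcont_def' (x : Fin 3 → ℚ) : vcont x = fcont Finset.univ x := rfl

lemma qcont_spec {P : ℚ[X]} (hP : P ≠ 0) :
    0 < qcont P ∧ ∃ z : ℕ → ℤ,
      (∀ i ∈ Finset.range (P.natDegree + 1), P.coeff i = qcont P * z i) ∧
      (Finset.range (P.natDegree + 1)).gcd z = 1 := by
  rw [qcont_def']
  exact fcont_spec _ _ (Finset.self_mem_range_succ _)
    (Polynomial.leadingCoeff_ne_zero.mpr hP)

lemma qcont_pos {P : ℚ[X]} (hP : P ≠ 0) : 0 < qcont P := (qcont_spec hP).1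

lemma qcont_coeff {P : ℚ[X]} (hP : P ≠ 0) (i : ℕ) : ∃ z : ℤ, P.coeff i = qcont P * z := by
  obtain ⟨-, z, hz, -⟩ := qcont_spec hP
  by_cases h : i < P.natDegree + 1
  · exact ⟨z i, hz i (Finset.mem_range.mpr h)⟩
  · exact ⟨0, by
      rw [Polynomial.coeff_eq_zero_of_natDegree_lt (by omega)]
      simp⟩

lemma qcont_ge_one {P : ℚ[X]} (hP : P ≠ 0) (h : ∀ i, ∃ z : ℤ, P.coeff i = (z : ℚ)) :
    1 ≤ qcont P := by
  obtain ⟨m, hm⟩ := fcont_dvd (Finset.range (P.natDegree + 1)) (fun i => P.coeff i) 1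
    one_pos (fun i _ => by simpa using h i)
  rw [qcont_def', hm]
  have hpos : (0 : ℚ) < 1 * m := by
    rw [← hm, ← qcont_def']
    exact qcont_pos hP
  have : 0 < m := by
    by_contra hc
    push_neg at hc
    have : (m : ℚ) ≤ 0 := by exact_mod_cast hc
    linarith
  have : (1 : ℤ) ≤ m := this
  simpa using (by exact_mod_cast this : (1:ℚ) ≤ (m:ℚ))

lemma qcont_C_mul {P : ℚ[X]} (hP : P ≠ 0) {c : ℚ} (hc : 0 < c) :
    qcont (C c * P) = c * qcont P := by
  have hc' : c ≠ 0 := hc.ne'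
  have hdeg : (C c * P).natDegree = P.natDegree := Polynomial.natDegree_C_mul hc'
  obtain ⟨hpos, z, hz, hgcd⟩ := qcont_spec hP
  rw [qcont_def', hdeg]
  refine fcont_eq_of _ _ (c * qcont P) (by positivity) z (fun i hi => ?_) hgcd
    (Finset.self_mem_range_succ P.natDegree) ?_
  · rw [Polynomial.coeff_C_mul, hz i hi]; ring
  · simp only [Polynomial.coeff_C_mul]
    exact mul_ne_zero hc' (Polynomial.leadingCoeff_ne_zero.mpr hP)

lemma lam_struct (a b : ℚ) (ha : 0 < a) :
    ∃ u v w : ℤ, 0 < u ∧ 0 < v ∧ a = (v : ℚ) / u ∧ b = (w : ℚ) / u ∧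
      lamheight a b
        = (Finset.univ.sup' Finset.univ_nonempty fun i => |![1, a, b] i|) * u := by
  obtain ⟨hpos, z, hz, -⟩ := fcont_spec Finset.univ ![1, a, b] (Finset.mem_univ 0)
    (by norm_num)
  set r := fcont Finset.univ ![1, a, b] with hr
  have h0 : (1 : ℚ) = r * z 0 := by simpa using hz 0 (Finset.mem_univ 0)
  have h1 : a = r * z 1 := by simpa using hz 1 (Finset.mem_univ 1)
  have h2 : b = r * z 2 := by simpa using hz 2 (Finset.mem_univ 2)
  have hz0Q : (0:ℚ) < z 0 := by nlinarith
  have hz0 : 0 < z 0 := by exact_mod_cast hz0Q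
  have hrz : r = 1 / (z 0 : ℚ) := by
    field_simp
    linarith [h0]
  have hz1Q : (0:ℚ) < z 1 := by nlinarith [h1.symm]
  refine ⟨z 0, z 1, z 2, hz0, by exact_mod_cast hz1Q, ?_, ?_, ?_⟩
  · rw [h1, hrz]; field_simp
  · rw [h2, hrz]; field_simp
  · rw [lamheight, vheight, vcont_def', ← hr, hrz]
    field_simp
end Chunk2
section Chunk3
open Polynomial

noncomputable def Tn (p : Polynomial ℚ) : ℚ :=
  ∑ j ∈ Finset.range (p.natDegree + 1), |p.coeff j|

lemma Tn_eq_of_le {p : Polynomial ℚ} {m : ℕ} (h : p.natDegree ≤ m) :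
    Tn p = ∑ j ∈ Finset.range (m + 1), |p.coeff j| := by
  apply Finset.sum_subset
  · exact Finset.range_subset_range.mpr (by omega)
  · intro j hj hj2
    rw [Finset.mem_range] at hj2
    push_neg at hj2
    rw [Polynomial.coeff_eq_zero_of_natDegree_lt (by omega)]
    simp

lemma Tn_nonneg (p : Polynomial ℚ) : 0 ≤ Tn p :=
  Finset.sum_nonneg fun _ _ => abs_nonneg _

lemma qnorm_le_Tn (p : Polynomial ℚ) : qnorm p ≤ Tn p := by
  simp only [qnorm, Tn]
  apply Finset.sup'_le
  intro b hb
  exact Finset.single_le_sum (f := fun j => |p.coeff j|) (fun _ _ => abs_nonneg _) hb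

lemma qnorm_nonneg (p : Polynomial ℚ) : 0 ≤ qnorm p := by
  simp only [qnorm]
  exact le_trans (abs_nonneg (p.coeff 0))
    (Finset.le_sup' (fun i => |p.coeff i|) (Finset.mem_range.mpr (by omega)))

lemma abs_coeff_le_qnorm (p : Polynomial ℚ) (i : ℕ) : |p.coeff i| ≤ qnorm p := by
  by_cases h : i ≤ p.natDegree
  · simp only [qnorm]
    exact Finset.le_sup' (fun j => |p.coeff j|) (Finset.mem_range.mpr (by omega))
  · rw [Polynomial.coeff_eq_zero_of_natDegree_lt (by omega)]
    simpa using qnorm_nonneg p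

lemma qnorm_pos {p : Polynomial ℚ} (hp : p ≠ 0) : 0 < qnorm p := by
  have h := abs_pos.mpr (Polynomial.leadingCoeff_ne_zero.mpr hp)
  simp only [qnorm]
  exact lt_of_lt_of_le h
    (Finset.le_sup' (fun j => |p.coeff j|) (Finset.self_mem_range_succ _))

lemma Tn_add (p q : Polynomial ℚ) : Tn (p + q) ≤ Tn p + Tn q := by
  set m := max p.natDegree q.natDegree with hm
  rw [Tn_eq_of_le (m := m) (le_trans (Polynomial.natDegree_add_le p q) le_rfl),
    Tn_eq_of_le (m := m) (le_max_left _ _), Tn_eq_of_le (m := m) (le_max_right _ _),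
    ← Finset.sum_add_distrib]
  refine Finset.sum_le_sum fun j _ => ?_
  rw [Polynomial.coeff_add]
  exact abs_add_le _ _

lemma Tn_C_mul (c : ℚ) (p : Polynomial ℚ) : Tn (Polynomial.C c * p) = |c| * Tn p := by
  rw [Tn_eq_of_le (Polynomial.natDegree_C_mul_le c p), Tn, Finset.mul_sum]
  exact Finset.sum_congr rfl fun j _ => by rw [Polynomial.coeff_C_mul, abs_mul]

lemma Tn_linear_mul (α β : ℚ) (p : Polynomial ℚ) :
    Tn ((Polynomial.C α * Polynomial.X + Polynomial.C β) * p) ≤ (|α| + |β|) * Tn p := by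
  have hdeg : ((Polynomial.C α * Polynomial.X + Polynomial.C β) * p).natDegree
      ≤ p.natDegree + 1 := by
    refine le_trans Polynomial.natDegree_mul_le ?_
    have := Polynomial.natDegree_linear_le (a := α) (b := β)
    omega
  rw [Tn_eq_of_le hdeg]
  have hco : ∀ j, ((Polynomial.C α * Polynomial.X + Polynomial.C β) * p).coeff j
      = α * (Polynomial.X * p).coeff j + β * p.coeff j := by
    intro j
    have h1 : (Polynomial.C α * Polynomial.X + Polynomial.C β) * p
        = Polynomial.C α * (Polynomial.X * p) + Polynomial.C β * p := by ring
    rw [h1, Polynomial.coeff_add, Polynomial.coeff_C_mul, Polynomial.coeff_C_mul]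
  have hb : ∀ j ∈ Finset.range (p.natDegree + 1 + 1),
      |((Polynomial.C α * Polynomial.X + Polynomial.C β) * p).coeff j|
        ≤ |α| * |(Polynomial.X * p).coeff j| + |β| * |p.coeff j| := by
    intro j _
    rw [hco j]
    refine le_trans (abs_add_le _ _) ?_
    rw [abs_mul, abs_mul]
  refine le_trans (Finset.sum_le_sum hb) ?_
  rw [Finset.sum_add_distrib, ← Finset.mul_sum, ← Finset.mul_sum]
  have hXp : ∑ j ∈ Finset.range (p.natDegree + 1 + 1), |(Polynomial.X * p).coeff j| = Tn p := by
    rw [Finset.sum_range_succ']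
    simp only [Polynomial.coeff_X_mul]
    rw [Polynomial.mul_coeff_zero, Polynomial.coeff_X_zero]
    simp [Tn]
  have hp2 : ∑ j ∈ Finset.range (p.natDegree + 1 + 1), |p.coeff j| = Tn p :=
    (Tn_eq_of_le (by omega)).symm
  rw [hXp, hp2]
  ring_nf
  exact le_refl _

lemma Tn_one : Tn 1 = 1 := by simp [Tn]

lemma Tn_linear_pow (α β : ℚ) (i : ℕ) :
    Tn ((Polynomial.C α * Polynomial.X + Polynomial.C β) ^ i) ≤ (|α| + |β|) ^ i := by
  induction i with
  | zero => simp [Tn_one]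
  | succ i ih =>
    rw [pow_succ']
    refine le_trans (Tn_linear_mul α β _) ?_
    rw [pow_succ']
    have h0 : (0:ℚ) ≤ |α| + |β| := by positivity
    nlinarith [Tn_nonneg ((Polynomial.C α * Polynomial.X + Polynomial.C β) ^ i)]

lemma Tn_sum_le {ι : Type*} (s : Finset ι) (g : ι → Polynomial ℚ) :
    Tn (∑ i ∈ s, g i) ≤ ∑ i ∈ s, Tn (g i) := by
  classical
  induction s using Finset.cons_induction with
  | empty => simp [Tn]
  | cons i s hi ih =>
    rw [Finset.sum_cons, Finset.sum_cons]
    exact le_trans (Tn_add _ _) (by linarith)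

lemma geomsum_le (t : ℚ) (ht : 0 ≤ t) (n : ℕ) :
    ∑ i ∈ Finset.range (n + 1), t ^ i ≤ (1 + t) ^ n := by
  induction n with
  | zero => simp
  | succ n ih =>
    rw [Finset.sum_range_succ']
    have h1 : ∑ i ∈ Finset.range (n + 1), t ^ (i + 1)
        = t * ∑ i ∈ Finset.range (n + 1), t ^ i := by
      rw [Finset.mul_sum]
      exact Finset.sum_congr rfl fun i _ => by ring
    rw [h1]
    have h2 : (1:ℚ) ≤ (1 + t) ^ n := one_le_pow₀ (by linarith)
    have h3 : t * ∑ i ∈ Finset.range (n + 1), t ^ i ≤ t * (1 + t) ^ n :=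
      mul_le_mul_of_nonneg_left ih ht
    calc t * ∑ i ∈ Finset.range (n + 1), t ^ i + t ^ 0
        ≤ t * (1 + t) ^ n + 1 := by simpa using h3
      _ ≤ (1 + t) ^ (n + 1) := by rw [pow_succ]; nlinarith

lemma comp_as_sum {P : Polynomial ℚ} (A : Polynomial ℚ) {n : ℕ} (hn : P.natDegree ≤ n) :
    P.comp A = ∑ i ∈ Finset.range (n + 1), Polynomial.C (P.coeff i) * A ^ i := by
  conv_lhs => rw [P.as_sum_range' (n + 1) (by omega)]
  rw [Polynomial.sum_comp]
  exact Finset.sum_congr rfl fun i _ => Polynomial.monomial_comp i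

lemma qnorm_comp_le (α β : ℚ) (P : Polynomial ℚ) {n : ℕ} (hn : P.natDegree ≤ n) :
    qnorm (P.comp (Polynomial.C α * Polynomial.X + Polynomial.C β))
      ≤ (1 + |α| + |β|) ^ n * qnorm P := by
  set A := Polynomial.C α * Polynomial.X + Polynomial.C β with hA
  set t := |α| + |β| with ht
  have ht0 : 0 ≤ t := by positivity
  calc qnorm (P.comp A) ≤ Tn (P.comp A) := qnorm_le_Tn _
    _ = Tn (∑ i ∈ Finset.range (n + 1), Polynomial.C (P.coeff i) * A ^ i) := by
        rw [comp_as_sum A hn]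
    _ ≤ ∑ i ∈ Finset.range (n + 1), Tn (Polynomial.C (P.coeff i) * A ^ i) := Tn_sum_le _ _
    _ = ∑ i ∈ Finset.range (n + 1), |P.coeff i| * Tn (A ^ i) := by
        exact Finset.sum_congr rfl fun i _ => Tn_C_mul _ _
    _ ≤ ∑ i ∈ Finset.range (n + 1), qnorm P * t ^ i := by
        refine Finset.sum_le_sum fun i _ => ?_
        have h1 := Tn_linear_pow α β i
        have h2 := abs_coeff_le_qnorm P i
        have h3 := Tn_nonneg (A ^ i)
        have h4 := abs_nonneg (P.coeff i)
        nlinarith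
    _ = qnorm P * ∑ i ∈ Finset.range (n + 1), t ^ i := by rw [Finset.mul_sum]
    _ ≤ qnorm P * (1 + t) ^ n := mul_le_mul_of_nonneg_left (geomsum_le t ht0 n) (qnorm_nonneg P)
    _ = (1 + |α| + |β|) ^ n * qnorm P := by rw [ht]; ring_nf

end Chunk3
section Chunk4
open Polynomial

lemma comp_linear_inv (a b : ℚ) (ha : a ≠ 0) (P : Polynomial ℚ) :
    (P.comp (C a * X + C b)).comp (C a⁻¹ * X + C (-(b/a))) = P := by
  rw [Polynomial.comp_assoc]
  have hac : a * a⁻¹ = 1 := mul_inv_cancel₀ ha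
  have habc : a * (-(b/a)) + b = 0 := by field_simp; ring
  have h : (C a * X + C b).comp (C a⁻¹ * X + C (-(b/a))) = X := by
    simp only [Polynomial.add_comp, Polynomial.mul_comp, Polynomial.C_comp, Polynomial.X_comp]
    have e1 : C a * (C a⁻¹ * X + C (-(b/a))) + C b
        = C (a * a⁻¹) * X + C (a * (-(b/a)) + b) := by
      simp only [Polynomial.C_mul, Polynomial.C_add]
      ring
    rw [e1, hac, habc]
    simp
  rw [h, Polynomial.comp_X]

lemma natDegree_comp_linear (a b : ℚ) (ha : a ≠ 0) (P : Polynomial ℚ) :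
    (P.comp (C a * X + C b)).natDegree = P.natDegree := by
  rw [Polynomial.natDegree_comp, Polynomial.natDegree_linear ha, mul_one]

lemma comp_linear_ne_zero (a b : ℚ) (ha : a ≠ 0) {P : Polynomial ℚ} (hP : P ≠ 0) :
    P.comp (C a * X + C b) ≠ 0 := by
  intro h
  apply hP
  have h2 := congrArg (fun Q : Polynomial ℚ => Q.comp (C a⁻¹ * X + C (-(b/a)))) h
  simp only [Polynomial.zero_comp] at h2
  rw [comp_linear_inv a b ha P] at h2
  exact h2

lemma key_cont (u v w : ℤ) (hu : 0 < u) (hv : v ≠ 0) (P : Polynomial ℚ) (hP : P ≠ 0)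
    (n : ℕ) (hn : P.natDegree ≤ n) :
    qcont P / (u : ℚ) ^ n
      ≤ qcont (P.comp (C ((v : ℚ)/u) * X + C ((w : ℚ)/u))) := by
  have huQ : ((u : ℚ)) ≠ 0 := by positivity
  set α : ℚ := (v : ℚ)/u with hα'
  set β : ℚ := (w : ℚ)/u with hβ'
  have hα : α ≠ 0 := div_ne_zero (Int.cast_ne_zero.mpr hv) huQ
  set A : Polynomial ℚ := C α * X + C β with hA
  set Q : Polynomial ℚ := P.comp A with hQdef
  have hQ : Q ≠ 0 := comp_linear_ne_zero α β hα hP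
  have hr : 0 < qcont P := qcont_pos hP
  choose z hz using qcont_coeff hP
  set L : Polynomial ℚ := C (v : ℚ) * X + C (w : ℚ) with hL
  have hLA : A = C ((u : ℚ)⁻¹) * L := by
    rw [hA, hL, hα', hβ', div_eq_inv_mul, div_eq_inv_mul, mul_add, ← mul_assoc,
      ← Polynomial.C_mul, ← Polynomial.C_mul]
  have hQsum : Q = ∑ i ∈ Finset.range (n+1), C (P.coeff i) * A ^ i := comp_as_sum A hn
  have hconst : ∀ i ∈ Finset.range (n+1),
      (u:ℚ)^n / qcont P * P.coeff i * ((u:ℚ)⁻¹)^i = ((u^(n-i) * z i : ℤ) : ℚ) := by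
    intro i hi
    rw [Finset.mem_range] at hi
    have hui : (u:ℚ)^(n-i) * (u:ℚ)^i = (u:ℚ)^n := by
      rw [← pow_add]
      congr 1
      omega
    rw [hz i]
    push_cast
    field_simp
    rw [← hui, one_div_pow, mul_assoc _ _ (1 / (u:ℚ) ^ i)]
    have h5 : (u:ℚ) ^ i * (1 / (u:ℚ) ^ i) = 1 := mul_one_div_cancel (pow_ne_zero i huQ)
    linear_combination ((u:ℚ) ^ (n - i) * (z i : ℚ)) * h5
  have key : C ((u:ℚ)^n / qcont P) * Q
      = ∑ i ∈ Finset.range (n+1), C (((u^(n-i) * z i : ℤ) : ℚ)) * L ^ i := by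
    rw [hQsum, Finset.mul_sum]
    refine Finset.sum_congr rfl fun i hi => ?_
    calc C ((u:ℚ)^n / qcont P) * (C (P.coeff i) * A ^ i)
        = C ((u:ℚ)^n / qcont P * P.coeff i * ((u:ℚ)⁻¹)^i) * L ^ i := by
          rw [hLA, mul_pow, ← Polynomial.C_pow, Polynomial.C_mul, Polynomial.C_mul]
          all_goals ring
      _ = C (((u^(n-i) * z i : ℤ) : ℚ)) * L ^ i := by rw [hconst i hi]
  set S : Polynomial ℤ := ∑ i ∈ Finset.range (n+1),
    Polynomial.C (u^(n-i) * z i) * (Polynomial.C v * Polynomial.X + Polynomial.C w) ^ i with hS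
  have hmap : S.map (Int.castRingHom ℚ) = C ((u:ℚ)^n / qcont P) * Q := by
    rw [key, hS, Polynomial.map_sum]
    refine Finset.sum_congr rfl fun i hi => ?_
    simp only [Polynomial.map_mul, Polynomial.map_pow, Polynomial.map_add, Polynomial.map_C,
      Polynomial.map_X, Int.coe_castRingHom, hL]
    all_goals push_cast
    all_goals ring
  have hint : ∀ j, ∃ m : ℤ, (C ((u:ℚ)^n / qcont P) * Q).coeff j = (m : ℚ) := by
    intro j
    refine ⟨S.coeff j, ?_⟩
    rw [← hmap, Polynomial.coeff_map]
    simp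
  have hcpos : 0 < (u:ℚ)^n / qcont P := by positivity
  have hne : C ((u:ℚ)^n / qcont P) * Q ≠ 0 :=
    mul_ne_zero (by rw [Ne, Polynomial.C_eq_zero]; exact hcpos.ne') hQ
  have h1 : 1 ≤ qcont (C ((u:ℚ)^n / qcont P) * Q) := qcont_ge_one hne hint
  rw [qcont_C_mul hQ hcpos] at h1
  have hq : 0 < qcont Q := qcont_pos hQ
  rw [div_le_iff₀ (by positivity)]
  have h2 : (u:ℚ)^n / qcont P * qcont Q * qcont P = qcont Q * (u:ℚ)^n := by
    field_simp
  nlinarith [mul_le_mul_of_nonneg_left h1 hr.le, h2]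

end Chunk4
section Chunk5
open Polynomial

set_option maxHeartbeats 2000000 in
theorem stmt_5 (a b : ℚ) (ha : 0 < a) (P : Polynomial ℚ) (hP : P ≠ 0)
    (n : ℕ) (hn : P.natDegree ≤ n) :
    (P.comp (Polynomial.C a * Polynomial.X + Polynomial.C b)).natDegree = P.natDegree ∧
    (3 * lamheight a b) ^ (-(n : ℤ)) ≤
      qheight (P.comp (Polynomial.C a * Polynomial.X + Polynomial.C b)) / qheight P ∧
    qheight (P.comp (Polynomial.C a * Polynomial.X + Polynomial.C b)) / qheight P ≤
      (3 * lamheight a b) ^ (n : ℤ) ∧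
    (lamheight a b) ^ (-(n : ℤ)) ≤
      qcont (P.comp (Polynomial.C a * Polynomial.X + Polynomial.C b)) / qcont P ∧
    qcont (P.comp (Polynomial.C a * Polynomial.X + Polynomial.C b)) / qcont P ≤
      (lamheight a b) ^ (n : ℤ) := by
  classical
  have ha' : a ≠ 0 := ha.ne'
  set Q : Polynomial ℚ := P.comp (C a * X + C b) with hQdef
  have hdeg : Q.natDegree = P.natDegree := natDegree_comp_linear a b ha' P
  have hQ : Q ≠ 0 := comp_linear_ne_zero a b ha' hP
  have hdegQ : Q.natDegree ≤ n := by omega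
  obtain ⟨u, v, w, hu, hv, hav, hbw, hH⟩ := lam_struct a b ha
  set M : ℚ := Finset.univ.sup' Finset.univ_nonempty fun i => |![1, a, b] i| with hM
  have hM1 : (1 : ℚ) ≤ M := by
    have h0 := Finset.le_sup' (fun i => |![1, a, b] i|) (Finset.mem_univ (0 : Fin 3))
    rw [← hM] at h0
    simpa using h0
  have hMa : a ≤ M := by
    have h0 := Finset.le_sup' (fun i => |![1, a, b] i|) (Finset.mem_univ (1 : Fin 3))
    rw [← hM] at h0
    simp only [Matrix.cons_val_one, Matrix.head_cons] at h0
    exact le_trans (le_abs_self a) h0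
  have hMb : |b| ≤ M := by
    have h0 := Finset.le_sup' (fun i => |![1, a, b] i|) (Finset.mem_univ (2 : Fin 3))
    rw [← hM] at h0
    simpa using h0
  have hM0 : (0 : ℚ) < M := lt_of_lt_of_le one_pos hM1
  have huQ : (0 : ℚ) < (u : ℚ) := by exact_mod_cast hu
  have hvQ : (0 : ℚ) < (v : ℚ) := by exact_mod_cast hv
  have hva : (v : ℚ) = a * u := by rw [hav]; field_simp
  have hvM : (v : ℚ) ≤ M * u := by rw [hva]; nlinarith
  have huM : (u : ℚ) ≤ M * u := by nlinarith
  -- positivity of the four quantities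
  have hN1 : 0 < qnorm P := qnorm_pos hP
  have hN2 : 0 < qnorm Q := qnorm_pos hQ
  have hC1 : 0 < qcont P := qcont_pos hP
  have hC2 : 0 < qcont Q := qcont_pos hQ
  -- content bounds
  have hclow : qcont P ≤ qcont Q * (u : ℚ) ^ n := by
    have h1 := key_cont u v w hu hv.ne' P hP n hn
    rw [← hav, ← hbw] at h1
    rw [← hQdef] at h1
    rw [div_le_iff₀ (by positivity)] at h1
    linarith
  have hQcompP : Q.comp (C ((u : ℚ) / v) * X + C (((-w : ℤ) : ℚ) / v)) = P := by
    have e1 : a⁻¹ = (u : ℚ) / v := by rw [hav, inv_div]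
    have e2 : -(b / a) = ((-w : ℤ) : ℚ) / v := by
      rw [hav, hbw]
      push_cast
      field_simp
    have h := comp_linear_inv a b ha' P
    rw [e1, e2] at h
    exact h
  have hcup : qcont Q ≤ qcont P * (v : ℚ) ^ n := by
    have h1 := key_cont v u (-w) hv hu.ne' Q hQ n hdegQ
    rw [hQcompP] at h1
    rw [div_le_iff₀ (by positivity)] at h1
    linarith
  -- norm bounds
  have h3M : 1 + |a| + |b| ≤ 3 * M := by
    have : |a| = a := abs_of_pos ha
    linarith [this ▸ hMa]
  have hnup : qnorm Q ≤ (3 * M) ^ n * qnorm P := by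
    have h1 := qnorm_comp_le a b P hn
    have h2 : (1 + |a| + |b|) ^ n ≤ (3 * M) ^ n :=
      pow_le_pow_left₀ (by positivity) h3M n
    calc qnorm Q ≤ (1 + |a| + |b|) ^ n * qnorm P := h1
      _ ≤ (3 * M) ^ n * qnorm P := mul_le_mul_of_nonneg_right h2 (qnorm_nonneg P)
  have habs1 : |a⁻¹| = a⁻¹ := abs_of_pos (inv_pos.mpr ha)
  have habs2 : |(-(b / a))| = |b| / a := by
    rw [abs_neg, abs_div, abs_of_pos ha]
  have h3M' : 1 + |a⁻¹| + |(-(b / a))| ≤ 3 * M / a := by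
    rw [le_div_iff₀ ha, habs1, habs2]
    have e : (1 + a⁻¹ + |b| / a) * a = a + 1 + |b| := by
      field_simp
      all_goals ring
    rw [e]
    linarith
  have hnlow : qnorm P ≤ (3 * M / a) ^ n * qnorm Q := by
    have h1 := qnorm_comp_le a⁻¹ (-(b / a)) Q hdegQ
    rw [hQdef, comp_linear_inv a b ha' P] at h1
    have h2 : (1 + |a⁻¹| + |(-(b / a))|) ^ n ≤ (3 * M / a) ^ n :=
      pow_le_pow_left₀ (by positivity) h3M' n
    calc qnorm P ≤ (1 + |a⁻¹| + |(-(b / a))|) ^ n * qnorm Q := h1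
      _ ≤ (3 * M / a) ^ n * qnorm Q := mul_le_mul_of_nonneg_right h2 (qnorm_nonneg Q)
  -- ratios as fractions
  have hqh1 : 0 < qheight P := div_pos hN1 hC1
  have hqh2 : 0 < qheight Q := div_pos hN2 hC2
  have hrat : qheight Q / qheight P = (qnorm Q * qcont P) / (qcont Q * qnorm P) := by
    rw [qheight, qheight]
    field_simp
  have hrat' : qheight P / qheight Q = (qnorm P * qcont Q) / (qcont P * qnorm Q) := by
    rw [qheight, qheight]
    field_simp
  -- height upper bound
  have hup : qheight Q / qheight P ≤ (3 * (M * u)) ^ n := by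
    rw [hrat, div_le_iff₀ (by positivity)]
    calc qnorm Q * qcont P ≤ ((3 * M) ^ n * qnorm P) * (qcont Q * (u : ℚ) ^ n) :=
        mul_le_mul hnup hclow hC1.le (by positivity)
      _ = (3 * (M * u)) ^ n * (qcont Q * qnorm P) := by
        rw [mul_pow, mul_pow]
        ring
  -- height lower bound (inverted)
  have hlow0 : qheight P / qheight Q ≤ (3 * (M * u)) ^ n := by
    rw [hrat', div_le_iff₀ (by positivity)]
    have e3 : (3 * M / a) ^ n * (v : ℚ) ^ n = (3 * (M * u)) ^ n := by
      rw [← mul_pow]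
      congr 1
      rw [hva]
      field_simp
    calc qnorm P * qcont Q ≤ ((3 * M / a) ^ n * qnorm Q) * (qcont P * (v : ℚ) ^ n) :=
        mul_le_mul hnlow hcup hC2.le (by positivity)
      _ = ((3 * M / a) ^ n * (v : ℚ) ^ n) * (qcont P * qnorm Q) := by ring
      _ = (3 * (M * u)) ^ n * (qcont P * qnorm Q) := by rw [e3]
  -- content ratio bounds
  have hcontup : qcont Q / qcont P ≤ (M * u) ^ n := by
    rw [div_le_iff₀ hC1]
    calc qcont Q ≤ qcont P * (v : ℚ) ^ n := hcup
      _ ≤ (M * u) ^ n * qcont P := by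
        have : (v : ℚ) ^ n ≤ (M * u) ^ n := pow_le_pow_left₀ hvQ.le hvM n
        nlinarith
  have hcontlow : ((M * u) ^ n)⁻¹ ≤ qcont Q / qcont P := by
    have h1 : ((M * u) ^ n)⁻¹ ≤ ((u : ℚ) ^ n)⁻¹ := by
      apply inv_anti₀ (by positivity)
      exact pow_le_pow_left₀ huQ.le huM n
    refine le_trans h1 ?_
    rw [inv_eq_one_div, div_le_div_iff₀ (by positivity) hC1]
    linarith
  -- put everything together
  have hHeq : lamheight a b = M * u := hH
  refine ⟨hdeg, ?_, ?_, ?_, ?_⟩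
  · rw [hHeq, zpow_neg, zpow_natCast]
    have h2 := inv_anti₀ (div_pos hqh1 hqh2) hlow0
    rw [inv_div] at h2
    exact h2
  · rw [hHeq, zpow_natCast]
    exact hup
  · rw [hHeq, zpow_neg, zpow_natCast]
    exact hcontlow
  · rw [hHeq, zpow_natCast]
    exact hcontup

end Chunk5
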